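/- Let (s_n)_{n≥1} ⊆ (0,1) satisfy s_2 < 1 - s_1/(1 - s_1) and s_n ≤ s_{n-2}/2 - 2·s_{n-1} for all n ≥ 3, and define c_n := 1 - s_n for n odd and c_n := s_n for n even, with a_n := 1 - c_n. Then the sequence (α_{2n-1}²)_{n≥1} is strictly increasing, i.e., c_1 < c_3·a_2 and c_{2n-1}·a_{2n-2} < c_{2n+1}·a_{2n} for all n ≥ 2. -/
import Mathlib


theorem stmt13 (s c a : ℕ → ℝ)
    (hs : ∀ n, 1 ≤ n → s n ∈ Set.Ioo (0 : ℝ) 1)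
    (h1 : s 2 < 1 - s 1 / (1 - s 1))
    (h2 : ∀ n, 3 ≤ n → s n ≤ s (n - 2) / 2 - 2 * s (n - 1))
    (hcodd : ∀ n, 1 ≤ n → Odd n → c n = 1 - s n)
    (hceven : ∀ n, 1 ≤ n → Even n → c n = s n)
    (ha : ∀ n, a n = 1 - c n) :
    c 1 < c 3 * a 2 ∧
    ∀ n : ℕ, 2 ≤ n → c (2 * n - 1) * a (2 * n - 2) < c (2 * n + 1) * a (2 * n) := by
  constructor
  · have hc1 := hcodd 1 (by norm_num) (by decide)
    have hc3 := hcodd 3 (by norm_num) (by decide)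
    have hc2 := hceven 2 (by norm_num) (by decide)
    have ha2 := ha 2
    have hr := h2 3 (by norm_num)
    norm_num at hr
    obtain ⟨p1, q1⟩ := hs 1 (by norm_num)
    obtain ⟨p2, q2⟩ := hs 2 (by norm_num)
    obtain ⟨p3, q3⟩ := hs 3 (by norm_num)
    rw [hc1, hc3, ha2, hc2]
    nlinarith [mul_pos p2 p3]
  · intro n hn
    obtain ⟨k, rfl⟩ : ∃ k, n = k + 2 := ⟨n - 2, by omega⟩
    have e1 : 2 * (k + 2) - 1 = 2 * k + 3 := by omega
    have e2 : 2 * (k + 2) - 2 = 2 * k + 2 := by omega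
    have e3 : 2 * (k + 2) + 1 = 2 * k + 5 := by omega
    have e4 : 2 * (k + 2) = 2 * k + 4 := by omega
    rw [e1, e2, e3, e4]
    have hc1 := hcodd (2 * k + 3) (by omega) ⟨k + 1, by omega⟩
    have hc2 := hceven (2 * k + 2) (by omega) ⟨k + 1, by omega⟩
    have hc3 := hcodd (2 * k + 5) (by omega) ⟨k + 2, by omega⟩
    have hc4 := hceven (2 * k + 4) (by omega) ⟨k + 2, by omega⟩
    have hr1 := h2 (2 * k + 4) (by omega)
    have hr2 := h2 (2 * k + 5) (by omega)
    have e5 : 2 * k + 4 - 2 = 2 * k + 2 := by omega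
    have e6 : 2 * k + 4 - 1 = 2 * k + 3 := by omega
    have e7 : 2 * k + 5 - 2 = 2 * k + 3 := by omega
    have e8 : 2 * k + 5 - 1 = 2 * k + 4 := by omega
    rw [e5, e6] at hr1
    rw [e7, e8] at hr2
    obtain ⟨p1, q1⟩ := hs (2 * k + 2) (by omega)
    obtain ⟨p2, q2⟩ := hs (2 * k + 3) (by omega)
    obtain ⟨p3, q3⟩ := hs (2 * k + 4) (by omega)
    obtain ⟨p4, q4⟩ := hs (2 * k + 5) (by omega)
    rw [hc1, hc3, ha (2 * k + 2), ha (2 * k + 4), hc2, hc4]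
    nlinarith [mul_pos p3 p4, mul_pos p1 p2, mul_pos p2 p3]
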